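/- No on-line algorithm for scheduling independent tasks on one CPU and one GPU has competitive ratio smaller than 2: for any deterministic on-line scheduler, an adversary presenting at most two tasks forces makespan at least 2 while the optimal off-line makespan is 1. -/
import Mathlib


/-- The makespan of an assignment `a` of two tasks (with CPU/GPU times given
by `p`) on one CPU and one GPU: tasks assigned to the same resource serialize
(`a j = true` means task `j` runs on the CPU). -/
noncomputable def mk2 (p : Fin 2 → ℝ × ℝ) (a : Fin 2 → Bool) : ℝ :=
  max (∑ j, if a j then (p j).1 else 0) (∑ j, if a j then 0 else (p j).2)

/-- no deterministic on-line algorithm for two independent tasks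
on one CPU and one GPU has competitive ratio below 2.  For any on-line
scheduler `alg` (whose decision on the first task does not depend on the
second task), the adversary produces an instance whose first task has times
`(1,1)`, with optimal makespan `1`, on which `alg` has makespan at least `2`. -/
theorem online_independent_lower_bound_two
    (alg : (Fin 2 → ℝ × ℝ) → (Fin 2 → Bool))
    (honline : ∀ p q : Fin 2 → ℝ × ℝ, p 0 = q 0 → alg p 0 = alg q 0) :
    ∃ p : Fin 2 → ℝ × ℝ, p 0 = (1, 1) ∧
      (∀ a : Fin 2 → Bool, 1 ≤ mk2 p a) ∧
      (∃ a : Fin 2 → Bool, mk2 p a = 1) ∧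
      2 ≤ mk2 p (alg p) := by
  classical
  have hmk : ∀ (p : Fin 2 → ℝ × ℝ) (a : Fin 2 → Bool),
      mk2 p a = max ((if a 0 then (p 0).1 else 0) + (if a 1 then (p 1).1 else 0))
        ((if a 0 then 0 else (p 0).2) + (if a 1 then 0 else (p 1).2)) := by
    intro p a
    simp [mk2, Fin.sum_univ_two]
  -- lower bound 1 ≤ mk2 for tasks (1,1) and second task with both times ≥ 1
  have hlb : ∀ (p : Fin 2 → ℝ × ℝ), p 0 = (1, 1) → 1 ≤ (p 1).1 → 1 ≤ (p 1).2 →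
      ∀ a : Fin 2 → Bool, 1 ≤ mk2 p a := by
    intro p hp h1 h2 a
    rw [hmk, hp]
    rw [le_max_iff]
    rcases Bool.eq_false_or_eq_true (a 0) with h0 | h0 <;>
      rcases Bool.eq_false_or_eq_true (a 1) with h1' | h1' <;>
        simp only [h0, h1', if_true, Bool.false_eq_true, if_false] <;>
        first
          | (left; linarith)
          | (right; linarith)
  by_cases hb : alg (![(1,1),(1,2)] : Fin 2 → ℝ × ℝ) 0 = true
  · refine ⟨![(1,1),(1,2)], rfl, hlb _ rfl (by norm_num) (by norm_num), ?_, ?_⟩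
    · refine ⟨![false, true], ?_⟩
      rw [hmk]; norm_num
    · rw [hmk, le_max_iff]
      rcases Bool.eq_false_or_eq_true (alg ![(1,1),(1,2)] 1) with h1 | h1 <;>
        rw [hb, h1] <;> norm_num
  · have hb' : alg (![(1,1),(2,1)] : Fin 2 → ℝ × ℝ) 0 = false := by
      have := honline (![(1,1),(2,1)]) (![(1,1),(1,2)]) rfl
      rw [this]
      exact Bool.eq_false_iff.mpr hb
    refine ⟨![(1,1),(2,1)], rfl, hlb _ rfl (by norm_num) (by norm_num), ?_, ?_⟩
    · refine ⟨![true, false], ?_⟩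
      rw [hmk]; norm_num
    · rw [hmk, le_max_iff]
      rcases Bool.eq_false_or_eq_true (alg ![(1,1),(2,1)] 1) with h1 | h1 <;>
        rw [hb', h1] <;> norm_num
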